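/- For every integer n ≥ 0, the functor π_n : D_n → Δ^(n) is an initial functor; that is, for every object [k] of Δ^(n) (0 ≤ k ≤ n), the comma category π_n ↓ [k] of costructured arrows from π_n to [k] is nonempty and connected. -/

import Mathlib

open CategoryTheory

/-- `D_n`: the poset of nonempty subsets of `{0,1,…,n}`, ordered by inclusion. -/
abbrev DSet (n : ℕ) : Type := {S : Finset (Fin (n + 1)) // S.Nonempty}

namespace DSet

lemma card_pos {n : ℕ} (S : DSet n) : 0 < S.1.card := Finset.card_pos.mpr S.2

lemma card_sub_le {n : ℕ} (S : DSet n) : S.1.card - 1 ≤ n := by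
  have h := Finset.card_le_univ S.1
  simp only [Finset.card_univ, Fintype.card_fin] at h
  omega

/-- The unique order isomorphism `ξ_S : [|S|-1] ≃o S`. -/
noncomputable def xi {n : ℕ} (S : DSet n) :
    Fin (S.1.card - 1 + 1) ≃o {x : Fin (n + 1) // x ∈ S.1} :=
  (Fin.castOrderIso (Nat.succ_pred_eq_of_pos (card_pos S))).trans (S.1.orderIsoOfFin rfl)

end DSet

/-- The object part of `π_n : D_n → Δ^{(n)}`, sending `S` to `[|S|-1]`. -/
def pinObj {n : ℕ} (S : DSet n) : SimplexCategory.Truncated n :=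
  ⟨SimplexCategory.mk (S.1.card - 1), by
    simpa [SimplexCategory.len_mk] using DSet.card_sub_le S⟩

/-- The map `π_n(S ⊆ T) : [|S|-1] → [|T|-1]` determined by `π_n(S⊆T) ∘ ξ_S = ξ_T ∘ (S ↪ T)`. -/
noncomputable def pinFun {n : ℕ} {S T : DSet n} (h : S ≤ T) :
    Fin (S.1.card - 1 + 1) → Fin (T.1.card - 1 + 1) :=
  fun i => (DSet.xi T).symm ⟨(DSet.xi S i : Fin (n + 1)), h (DSet.xi S i).2⟩

lemma pinFun_coe {n : ℕ} {S T : DSet n} (h : S ≤ T) (i : Fin (S.1.card - 1 + 1)) :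
    ((DSet.xi T) (pinFun h i) : Fin (n + 1)) = ((DSet.xi S) i : Fin (n + 1)) := by
  unfold pinFun
  rw [OrderIso.apply_symm_apply]

lemma pinFun_mono {n : ℕ} {S T : DSet n} (h : S ≤ T) : Monotone (pinFun h) := by
  intro i j hij
  apply (DSet.xi T).symm.monotone
  exact Subtype.mk_le_mk.mpr (Subtype.coe_le_coe.mpr ((DSet.xi S).monotone hij))

/-- The functor `π_n : D_n ⥤ Δ^{(n)}`. -/
noncomputable def pin (n : ℕ) : DSet n ⥤ SimplexCategory.Truncated n where
  obj := pinObj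
  map {S T} f := ObjectProperty.homMk (SimplexCategory.Hom.mk ⟨pinFun (leOfHom f), pinFun_mono (leOfHom f)⟩)
  map_id S := by
    apply ObjectProperty.hom_ext
    apply SimplexCategory.Hom.ext
    apply OrderHom.ext
    funext i
    have h1 : pinFun (leOfHom (𝟙 S)) i = i := by
      apply (DSet.xi S).injective
      apply Subtype.coe_injective
      simp only [pinFun_coe]
      exact pinFun_coe _ i
    exact h1
  map_comp {S T U} f g := by
    apply ObjectProperty.hom_ext
    apply SimplexCategory.Hom.ext
    apply OrderHom.ext
    funext i
    have h1 : pinFun (leOfHom (f ≫ g)) i = pinFun (leOfHom g) (pinFun (leOfHom f) i) := by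
      apply (DSet.xi U).injective
      apply Subtype.coe_injective
      simp only [pinFun_coe]
      exact (pinFun_coe _ i).trans (pinFun_coe _ i).symm
    exact h1


noncomputable section PinInitial

open CategoryTheory SimplexCategory

variable {n : ℕ} (d : SimplexCategory.Truncated n)

def Sgl (a : Fin (n + 1)) : DSet n := ⟨{a}, Finset.singleton_nonempty a⟩

lemma xi_sgl (a : Fin (n + 1)) (i : Fin ((Sgl a).1.card - 1 + 1)) :
    (DSet.xi (Sgl a) i : Fin (n + 1)) = a :=
  Finset.mem_singleton.mp (DSet.xi (Sgl a) i).2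

def sing (a : Fin (n + 1)) (j : Fin (d.obj.len + 1)) : CostructuredArrow (pin n) d :=
  CostructuredArrow.mk (Y := Sgl a)
    (show (pin n).obj (Sgl a) ⟶ d from ObjectProperty.homMk (SimplexCategory.const _ d.obj j))

lemma sing_eq (a : Fin (n + 1)) (h : (pin n).obj (Sgl a) ⟶ d) :
    CostructuredArrow.mk h = sing d a (h.hom.toOrderHom ⟨0, Nat.zero_lt_succ _⟩) := by
  congr 1
  apply ObjectProperty.hom_ext
  apply SimplexCategory.Hom.ext
  apply OrderHom.ext
  funext i
  have hi' : (i : ℕ) < 1 := i.isLt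
  have hi : i = ⟨0, Nat.zero_lt_succ _⟩ := by
    apply Fin.ext
    show (i : ℕ) = (0 : ℕ)
    omega
  subst hi
  rfl

def stepOH (S : DSet n) (a : Fin (n + 1)) {j j' : Fin (d.obj.len + 1)} (hj : j ≤ j') :
    Fin (S.1.card - 1 + 1) →o Fin (d.obj.len + 1) where
  toFun i := if (DSet.xi S i : Fin (n + 1)) ≤ a then j else j'
  monotone' := by
    intro i₁ i₂ h12
    by_cases h2 : (DSet.xi S i₂ : Fin (n + 1)) ≤ a
    · have h1 : (DSet.xi S i₁ : Fin (n + 1)) ≤ a :=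
        le_trans (Subtype.coe_le_coe.mpr ((DSet.xi S).monotone h12)) h2
      simp [h1, h2]
    · by_cases h1 : (DSet.xi S i₁ : Fin (n + 1)) ≤ a
      · simp [h1, h2, hj]
      · simp [h1, h2]

def pairSet (a b : Fin (n + 1)) : DSet n := ⟨{a, b}, Finset.insert_nonempty a {b}⟩

def pairHom (a b : Fin (n + 1)) {j j' : Fin (d.obj.len + 1)} (hj : j ≤ j') :
    (pin n).obj (pairSet a b) ⟶ d :=
  ObjectProperty.homMk (show (pinObj (pairSet a b)).obj ⟶ d.obj from
    SimplexCategory.Hom.mk (stepOH d (pairSet a b) a hj))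

lemma zigzag_pair (a b : Fin (n + 1)) (hab : a < b) (j j' : Fin (d.obj.len + 1))
    (hj : j ≤ j') : Zigzag (sing d a j) (sing d b j') := by
  have ha : Sgl a ≤ pairSet a b := by
    intro x hx
    exact Finset.mem_insert.mpr (Or.inl (Finset.mem_singleton.mp hx))
  have hb : Sgl b ≤ pairSet a b := by
    intro x hx
    exact Finset.mem_insert.mpr (Or.inr hx)
  have f₁ : sing d a j ⟶ CostructuredArrow.mk (pairHom d a b hj) := by
    refine CostructuredArrow.homMk (homOfLE ha) ?_
    apply ObjectProperty.hom_ext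
    apply SimplexCategory.Hom.ext
    apply OrderHom.ext
    funext i
    show stepOH d (pairSet a b) a hj (pinFun ha i) = j
    have hcoe : (DSet.xi (pairSet a b) (pinFun ha i) : Fin (n + 1)) = a := by
      exact (pinFun_coe ha i).trans (xi_sgl a i)
    exact if_pos (le_of_eq hcoe)
  have f₂ : sing d b j' ⟶ CostructuredArrow.mk (pairHom d a b hj) := by
    refine CostructuredArrow.homMk (homOfLE hb) ?_
    apply ObjectProperty.hom_ext
    apply SimplexCategory.Hom.ext
    apply OrderHom.ext
    funext i
    show stepOH d (pairSet a b) a hj (pinFun hb i) = j'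
    have hcoe : (DSet.xi (pairSet a b) (pinFun hb i) : Fin (n + 1)) = b := by
      exact (pinFun_coe hb i).trans (xi_sgl b i)
    exact if_neg (not_le.mpr (lt_of_lt_of_eq hab hcoe.symm))
  exact Relation.ReflTransGen.tail (Relation.ReflTransGen.single (Or.inl ⟨f₁⟩))
    (Or.inr ⟨f₂⟩)

lemma zigzag_sing_base (a : Fin (n + 1)) (j : Fin (d.obj.len + 1)) :
    Zigzag (sing d a j) (sing d (Fin.last n) (Fin.last d.obj.len)) := by
  rcases lt_or_eq_of_le (Fin.le_last a) with h | h
  · exact zigzag_pair d a (Fin.last n) h j (Fin.last d.obj.len) (Fin.le_last j)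
  · subst h
    rcases Nat.eq_zero_or_pos n with hn | hn
    · have hk : d.obj.len = 0 := Nat.le_zero.mp (hn ▸ d.property)
      have hj : j = Fin.last d.obj.len := by
        apply Fin.ext
        have := j.isLt
        simp [Fin.last]
        omega
      rw [hj]
    · have h0 : (0 : Fin (n + 1)) < Fin.last n := by
        rw [Fin.lt_iff_val_lt_val]
        simpa using hn
      have z1 : Zigzag (sing d (0 : Fin (n + 1)) (0 : Fin (d.obj.len + 1)))
          (sing d (Fin.last n) j) :=
        zigzag_pair d 0 (Fin.last n) h0 0 j (Fin.zero_le j)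
      have z2 : Zigzag (sing d (0 : Fin (n + 1)) (0 : Fin (d.obj.len + 1)))
          (sing d (Fin.last n) (Fin.last d.obj.len)) :=
        zigzag_pair d 0 (Fin.last n) h0 0 (Fin.last d.obj.len) (Fin.zero_le _)
      exact Relation.ReflTransGen.trans (zigzag_symmetric.symm _ _ z1) z2

lemma zigzag_to_sing (Y : CostructuredArrow (pin n) d) :
    ∃ a j, Zigzag Y (sing d a j) := by
  obtain ⟨a, ha⟩ := Y.left.2
  have hle : Sgl a ≤ Y.left := by
    intro x hx
    rwa [Finset.mem_singleton.mp hx]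
  set h : (pin n).obj (Sgl a) ⟶ d := (pin n).map (homOfLE hle) ≫ Y.hom with hh
  have f : CostructuredArrow.mk h ⟶ Y := CostructuredArrow.homMk (homOfLE hle)
  refine ⟨a, h.hom.toOrderHom ⟨0, Nat.zero_lt_succ _⟩, ?_⟩
  rw [← sing_eq d a h]
  exact Relation.ReflTransGen.single (Or.inr ⟨f⟩)

end PinInitial

/-- For every integer `n ≥ 0`, the functor `π_n : D_n ⥤ Δ^{(n)}` is an initial
functor: for every object `[k]` of `Δ^{(n)}` (`0 ≤ k ≤ n`), the comma category
`π_n ↓ [k]` of costructured arrows from `π_n` to `[k]` is nonempty and connected. -/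
theorem pin_initial (n : ℕ) : (pin n).Initial := by
  constructor
  intro d
  have : Nonempty (CostructuredArrow (pin n) d) := ⟨sing d 0 0⟩
  apply zigzag_isConnected
  intro Y₁ Y₂
  obtain ⟨a₁, j₁, z₁⟩ := zigzag_to_sing d Y₁
  obtain ⟨a₂, j₂, z₂⟩ := zigzag_to_sing d Y₂
  exact Relation.ReflTransGen.trans
    (Relation.ReflTransGen.trans z₁ (zigzag_sing_base d a₁ j₁))
    (Relation.ReflTransGen.trans (zigzag_symmetric.symm _ _ (zigzag_sing_base d a₂ j₂))
      (zigzag_symmetric.symm _ _ z₂))
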